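/- Reverse CBS inequality (Theorem 2.1): if a, A ∈ K and x, y, z ∈ X satisfy Re(Ay − x, x − ay | z) ≥ 0, then 0 ≤ ‖x|z‖²‖y|z‖² − |(x, y | z)|² ≤ (1/4)|A − a|² ‖y|z‖⁴. -/

import Mathlib

open RCLike

/-- A 2-inner product space over `𝕜 = ℝ` or `ℂ`. -/
structure TwoIP (𝕜 : Type) (X : Type) [RCLike 𝕜] [AddCommGroup X] [Module 𝕜 X] where
  ip : X → X → X → 𝕜
  re_nonneg : ∀ x z : X, 0 ≤ re (ip x x z)
  im_zero : ∀ x z : X, im (ip x x z) = 0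
  eq_zero_iff : ∀ x z : X, ip x x z = 0 ↔ ¬ LinearIndependent 𝕜 ![x, z]
  swap : ∀ x z : X, ip x x z = ip z z x
  conj_symm : ∀ x y z : X, ip x y z = (starRingEnd 𝕜) (ip y x z)
  smul_left : ∀ (α : 𝕜) (x y z : X), ip (α • x) y z = α * ip x y z
  add_left : ∀ x x' y z : X, ip (x + x') y z = ip x y z + ip x' y z

section Aux

variable {𝕜 X : Type} [RCLike 𝕜] [AddCommGroup X] [Module 𝕜 X] (T : TwoIP 𝕜 X)

theorem TwoIP.add_right (u v w z : X) :
    T.ip u (v + w) z = T.ip u v z + T.ip u w z := by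
  rw [T.conj_symm u (v + w) z, T.add_left, map_add, ← T.conj_symm, ← T.conj_symm]

theorem TwoIP.smul_right (α : 𝕜) (u v z : X) :
    T.ip u (α • v) z = (starRingEnd 𝕜) α * T.ip u v z := by
  rw [T.conj_symm u (α • v) z, T.smul_left, map_mul, ← T.conj_symm]

theorem TwoIP.neg_left (u w z : X) : T.ip (-u) w z = -T.ip u w z := by
  rw [← neg_one_smul 𝕜 u, T.smul_left]; ring

theorem TwoIP.sub_left (u v w z : X) :
    T.ip (u - v) w z = T.ip u w z - T.ip v w z := by
  rw [sub_eq_add_neg, T.add_left, T.neg_left, sub_eq_add_neg]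

theorem TwoIP.sub_right (u v w z : X) :
    T.ip u (v - w) z = T.ip u v z - T.ip u w z := by
  rw [T.conj_symm u (v - w) z, T.sub_left, map_sub, ← T.conj_symm, ← T.conj_symm]

/-- The `PreInnerProductSpace.Core` obtained by fixing `z` (with swapped arguments,
since mathlib's convention is conjugate-linear in the first argument). -/
def TwoIP.core (z : X) : PreInnerProductSpace.Core 𝕜 X where
  inner u v := T.ip v u z
  conj_inner_symm u v := (T.conj_symm v u z).symm
  re_inner_nonneg u := T.re_nonneg u z
  add_left u v w := T.add_right w u v z
  smul_left u v r := T.smul_right r v u z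

theorem TwoIP.cbs (x y z : X) :
    ‖T.ip x y z‖ ^ 2 ≤ re (T.ip x x z) * re (T.ip y y z) := by
  have := @InnerProductSpace.Core.inner_mul_inner_self_le 𝕜 X _ _ _ (T.core z) y x
  have h1 : @inner 𝕜 X (T.core z).toInner y x = T.ip x y z := rfl
  have h2 : @inner 𝕜 X (T.core z).toInner x y = T.ip y x z := rfl
  have h3 : @inner 𝕜 X (T.core z).toInner y y = T.ip y y z := rfl
  have h4 : @inner 𝕜 X (T.core z).toInner x x = T.ip x x z := rfl
  rw [h1, h2, h3, h4, T.conj_symm y x z, norm_conj] at this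
  rw [sq]
  linarith [this]

end Aux

theorem stmt {𝕜 X : Type} [RCLike 𝕜] [AddCommGroup X] [Module 𝕜 X]
    (T : TwoIP 𝕜 X) (hdim : 1 < Module.rank 𝕜 X) (x y z : X) (a A : 𝕜)
    (h : 0 ≤ re (T.ip (A • y - x) (x - a • y) z)) :
    0 ≤ Real.sqrt (re (T.ip x x z)) ^ 2 * Real.sqrt (re (T.ip y y z)) ^ 2 - ‖T.ip x y z‖ ^ 2 ∧
    Real.sqrt (re (T.ip x x z)) ^ 2 * Real.sqrt (re (T.ip y y z)) ^ 2 - ‖T.ip x y z‖ ^ 2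
      ≤ (1/4) * ‖A - a‖ ^ 2 * Real.sqrt (re (T.ip y y z)) ^ 4 := by
  have hp : (0:ℝ) ≤ re (T.ip x x z) := T.re_nonneg x z
  have hq : (0:ℝ) ≤ re (T.ip y y z) := T.re_nonneg y z
  have hsx : Real.sqrt (re (T.ip x x z)) ^ 2 = re (T.ip x x z) := Real.sq_sqrt hp
  have hsy : Real.sqrt (re (T.ip y y z)) ^ 2 = re (T.ip y y z) := Real.sq_sqrt hq
  have hsy4 : Real.sqrt (re (T.ip y y z)) ^ 4 = re (T.ip y y z) ^ 2 := by
    rw [show (4:ℕ) = 2 * 2 from rfl, pow_mul, hsy]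
  rw [hsx, hsy, hsy4]
  set p := re (T.ip x x z) with hpdef
  set q := re (T.ip y y z) with hqdef
  set S := T.ip x y z with hSdef
  -- expand the hypothesis
  have hE : T.ip (A • y - x) (x - a • y) z
      = A * (starRingEnd 𝕜) S + (starRingEnd 𝕜) a * S
        - (A * (starRingEnd 𝕜) a) * T.ip y y z - T.ip x x z := by
    simp only [T.sub_left, T.sub_right, T.smul_left, T.smul_right]
    rw [T.conj_symm y x z]
    ring
  have hre : re (T.ip (A • y - x) (x - a • y) z)
      = (re A + re a) * re S + (im A + im a) * im S
        - (re A * re a + im A * im a) * q - p := by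
    rw [hE]
    simp only [map_add, map_sub, RCLike.mul_re, RCLike.mul_im, RCLike.conj_re, RCLike.conj_im,
      T.im_zero y z, ← hqdef, ← hpdef]
    ring
  rw [hre] at h
  have hcbs : ‖S‖ ^ 2 ≤ p * q := T.cbs x y z
  constructor
  · linarith
  · have hS2 : ‖S‖ ^ 2 = re S * re S + im S * im S := RCLike.norm_sq_eq_def
    have hAa : ‖A - a‖ ^ 2 = (re A - re a) * (re A - re a) + (im A - im a) * (im A - im a) := by
      rw [RCLike.norm_sq_eq_def]; simp [map_sub]
    rw [hS2, hAa]
    nlinarith [mul_nonneg hq h, sq_nonneg (2 * re S - q * (re a + re A)),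
      sq_nonneg (2 * im S - q * (im a + im A)), sq_nonneg q]
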